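/- Let V be a finite-dimensional irreducible sp(2n)-module, restricted to the subalgebra sp(2n-2) preserving coordinates ±2,...,±n, and let Z ⊂ Sp(2n) be the subgroup of upper unitriangular symplectic matrices with Z_{Sp(2n-2)} its intersection with Sp(2n-2). In the Zhelobenko realization of V as functions f on Z, a vector v ∈ V is an sp(2n-2)-highest vector if and only if the corresponding function f is invariant under right translation by Z_{Sp(2n-2)}, and this holds if and only if f depends only on the variables z_{-n,-1},...,z_{-2,-1}, z_{-n,1},...,z_{-1,1}. -/

import Mathlib

open Matrix

abbrev Idx (n : ℕ) := Fin n ⊕ Fin n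

def negIdx {n : ℕ} : Idx n → Idx n := Sum.swap

def sgn {n : ℕ} : Idx n → ℂ := Sum.elim (fun _ => -1) (fun _ => 1)

/-- `Sum.inl a ↦ -(a+1)`, `Sum.inr a ↦ a+1`. -/
def idxVal {n : ℕ} : Idx n → ℤ :=
  Sum.elim (fun a => -(a.1 + 1 : ℤ)) (fun a => (a.1 + 1 : ℤ))

def symJ (n : ℕ) : Matrix (Idx n) (Idx n) ℂ :=
  fun i j => match i, j with
  | Sum.inl a, Sum.inr b => if a = b then 1 else 0
  | Sum.inr a, Sum.inl b => if a = b then -1 else 0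
  | _, _ => 0

def Emat {n : ℕ} (i j : Idx n) : Matrix (Idx n) (Idx n) ℂ :=
  Matrix.single i j 1

/-- `F_{i,j} = E_{i,j} - sign(i) sign(j) E_{-j,-i}` spanning `sp(2n)`. -/
def Fmat {n : ℕ} (i j : Idx n) : Matrix (Idx n) (Idx n) ℂ :=
  Emat i j - (sgn i * sgn j) • Emat (negIdx j) (negIdx i)

/-- The subgroup `Z` of upper unitriangular symplectic matrices (with respect to the
order `-n < ⋯ < -1 < 1 < ⋯ < n`). -/
def Zset (n : ℕ) : Set (Matrix (Idx n) (Idx n) ℂ) :=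
  {z | zᵀ * symJ n * z = symJ n ∧
    ∀ i j : Idx n, idxVal j ≤ idxVal i → z i j = if i = j then 1 else 0}

/-- The subgroup `Z_{Sp(2n-2)}` : elements of `Z` lying in the subgroup `Sp(2n-2)`
preserving the coordinates `±2,...,±n` (and fixing the coordinates `±1`). -/
def ZSpset (n : ℕ) : Set (Matrix (Idx n) (Idx n) ℂ) :=
  {u | u ∈ Zset n ∧
    ∀ i j : Idx n, (idxVal i).natAbs = 1 ∨ (idxVal j).natAbs = 1 →
      u i j = if i = j then 1 else 0}

namespace ZhelAux
variable {n : ℕ}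

lemma idxVal_inj : Function.Injective (idxVal (n := n)) := by
  rintro (a|a) (b|b) h <;> simp [idxVal] at h
  · exact congrArg Sum.inl (Fin.ext (by omega))
  · omega
  · omega
  · exact congrArg Sum.inr (Fin.ext (by omega))

lemma negIdx_negIdx (i : Idx n) : negIdx (negIdx i) = i := by cases i <;> rfl

lemma idxVal_negIdx (i : Idx n) : idxVal (negIdx i) = -idxVal i := by
  cases i <;> simp [idxVal, negIdx]

lemma sgn_negIdx (i : Idx n) : sgn (negIdx i) = -sgn i := by
  cases i <;> simp [sgn, negIdx]

lemma sgn_mul_self (i : Idx n) : sgn i * sgn i = 1 := by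
  cases i <;> simp [sgn]

lemma sgn_ne_zero (i : Idx n) : sgn i ≠ 0 := by
  cases i <;> simp [sgn]

lemma idxVal_ne_zero (i : Idx n) : idxVal i ≠ 0 := by
  cases i <;> simp [idxVal] <;> omega

lemma ne_negIdx (i : Idx n) : i ≠ negIdx i := by cases i <;> simp [negIdx]

lemma symJ_apply (i j : Idx n) : symJ n i j = if j = negIdx i then sgn j else 0 := by
  rcases i with a|a <;> rcases j with b|b <;>
    simp only [symJ, negIdx, sgn, Sum.swap, Sum.elim_inl, Sum.elim_inr,
      Sum.inl.injEq, Sum.inr.injEq, reduceCtorEq, if_false] <;>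
    first
      | rfl
      | (split <;> split <;> simp_all [eq_comm])

lemma Emat_apply (i j x y : Idx n) :
    Emat i j x y = if x = i ∧ y = j then 1 else 0 := by
  simp only [Emat, Matrix.single, of_apply]
  congr 1
  exact propext ⟨fun ⟨h1, h2⟩ => ⟨h1.symm, h2.symm⟩, fun ⟨h1, h2⟩ => ⟨h1.symm, h2.symm⟩⟩

lemma Fmat_apply (i j x y : Idx n) :
    Fmat i j x y = (if x = i ∧ y = j then 1 else 0)
      - sgn i * sgn j * (if x = negIdx j ∧ y = negIdx i then 1 else 0) := by
  simp [Fmat, Emat_apply, Matrix.sub_apply, Matrix.smul_apply, smul_eq_mul, mul_ite, mul_one, mul_zero]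



lemma negIdx_injective : Function.Injective (negIdx (n := n)) := fun a b h => by
  rw [← negIdx_negIdx a, h, negIdx_negIdx]

lemma negIdx_eq_iff {i j : Idx n} : i = negIdx j ↔ j = negIdx i := by
  constructor <;> (rintro rfl; rw [negIdx_negIdx])

lemma Zset.diag {z : Matrix (Idx n) (Idx n) ℂ} (hz : z ∈ Zset n) (i : Idx n) : z i i = 1 := by
  have := hz.2 i i le_rfl; simpa using this

lemma Zset.mul {z w : Matrix (Idx n) (Idx n) ℂ} (hz : z ∈ Zset n) (hw : w ∈ Zset n) :
    z * w ∈ Zset n := by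
  obtain ⟨hz1, hz2⟩ := hz; obtain ⟨hw1, hw2⟩ := hw
  refine ⟨?_, ?_⟩
  · have : (z * w)ᵀ * symJ n * (z * w) = wᵀ * (zᵀ * symJ n * z) * w := by
      rw [transpose_mul]; noncomm_ring
    rw [this, hz1, hw1]
  · intro i j hij
    rw [mul_apply, Finset.sum_eq_single i]
    · rw [Zset.diag ⟨hz1, hz2⟩ i, one_mul]; exact hw2 i j hij
    · intro k _ hk
      rcases le_or_gt (idxVal k) (idxVal i) with h | h
      · rw [hz2 i k h, if_neg (fun e => hk (e.symm)), zero_mul]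
      · rw [hw2 k j (le_of_lt (lt_of_le_of_lt hij h)),
          if_neg (by rintro rfl; omega), mul_zero]
    · intro h; exact absurd (Finset.mem_univ i) h

/-- Entrywise symplectic relation. -/
lemma symp_rel {z : Matrix (Idx n) (Idx n) ℂ} (hz : zᵀ * symJ n * z = symJ n) (a b : Idx n) :
    ∑ l, z (negIdx l) a * (sgn l * z l b) = symJ n a b := by
  have h : (zᵀ * symJ n * z) a b = symJ n a b := by rw [hz]
  rw [mul_apply] at h
  simp_rw [mul_apply, transpose_apply, symJ_apply] at h
  rw [symJ_apply, ← h]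
  refine Finset.sum_congr rfl fun l _ => ?_
  rw [Finset.sum_eq_single (negIdx l)]
  · rw [if_pos (negIdx_negIdx l).symm]; ring
  · intro k _ hk
    rw [if_neg (fun e => hk (negIdx_eq_iff.mp e)), mul_zero]
  · intro h'; exact absurd (Finset.mem_univ _) h'

/-- The explicit inverse of a symplectic matrix. -/
def zinv (z : Matrix (Idx n) (Idx n) ℂ) : Matrix (Idx n) (Idx n) ℂ :=
  fun i j => sgn i * sgn j * z (negIdx j) (negIdx i)

lemma zinv_mul {z : Matrix (Idx n) (Idx n) ℂ} (hz : z ∈ Zset n) :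
    zinv z * z = 1 := by
  ext i j
  rw [mul_apply]
  have h := symp_rel hz.1 (negIdx i) j
  have : ∀ k : Idx n, zinv z i k * z k j = sgn i * (z (negIdx k) (negIdx i) * (sgn k * z k j)) := by
    intro k; simp only [zinv]; ring
  simp_rw [this, ← Finset.mul_sum, h, symJ_apply, negIdx_negIdx]
  rcases eq_or_ne j i with rfl | hne
  · simp [sgn_mul_self]
  · simp [hne, Ne.symm hne, one_apply]

lemma mul_zinv {z : Matrix (Idx n) (Idx n) ℂ} (hz : z ∈ Zset n) :
    z * zinv z = 1 := mul_eq_one_comm.mp (zinv_mul hz)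

lemma zinv_mem {z : Matrix (Idx n) (Idx n) ℂ} (hz : z ∈ Zset n) :
    zinv z ∈ Zset n := by
  refine ⟨?_, ?_⟩
  · have h1 : (z * zinv z)ᵀ * symJ n * (z * zinv z) = symJ n := by
      rw [mul_zinv hz]; simp
    have h2 : (z * zinv z)ᵀ * symJ n * (z * zinv z)
        = (zinv z)ᵀ * (zᵀ * symJ n * z) * zinv z := by
      rw [transpose_mul]; noncomm_ring
    rw [h2, hz.1] at h1; exact h1
  · intro i j hij
    show sgn i * sgn j * z (negIdx j) (negIdx i) = _
    have : idxVal (negIdx i) ≤ idxVal (negIdx j) := by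
      rw [idxVal_negIdx, idxVal_negIdx]; omega
    rw [hz.2 _ _ this]
    rcases eq_or_ne i j with rfl | hne
    · simp [sgn_mul_self]
    · rw [if_neg (fun e => hne (negIdx_injective e).symm), if_neg hne, mul_zero]

/-- If row `i` of `z ∈ Zset` is an identity row, then column `negIdx i` is an identity column. -/
lemma row_id_col_id {z : Matrix (Idx n) (Idx n) ℂ} (hz : z ∈ Zset n) {i : Idx n}
    (h : ∀ k, z i k = if i = k then 1 else 0) (b : Idx n) :
    z b (negIdx i) = if b = negIdx i then 1 else 0 := by
  have h1 : (z * zinv z) b (negIdx i) = (1 : Matrix (Idx n) (Idx n) ℂ) b (negIdx i) := by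
    rw [mul_zinv hz]
  rw [mul_apply] at h1
  have h2 : ∀ k : Idx n, z b k * zinv z k (negIdx i)
      = z b k * (sgn k * sgn (negIdx i) * (if negIdx i = k then 1 else 0)) := by
    intro k
    simp only [zinv, negIdx_negIdx]
    rw [h (negIdx k)]
    congr 2
    by_cases e : i = negIdx k
    · rw [if_pos e, if_pos ((negIdx_eq_iff.mp e).symm)]
    · rw [if_neg e, if_neg (fun e2 => e (negIdx_eq_iff.mp e2.symm))]
  simp_rw [h2] at h1
  rw [Finset.sum_eq_single (negIdx i)] at h1
  · rw [if_pos rfl, mul_one, sgn_mul_self, mul_one] at h1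
    rw [h1, one_apply]
  · intro k _ hk
    rw [if_neg (Ne.symm hk), mul_zero, mul_zero]
  · intro h'; exact absurd (Finset.mem_univ _) h'




lemma sgn_cases (i : Idx n) : sgn i = 1 ∨ sgn i = -1 := by
  cases i <;> simp [sgn]

lemma Fmat_mul_self {i j : Idx n} (hij : i ≠ j) : Fmat i j * Fmat i j = 0 := by
  ext x y
  rw [mul_apply, Matrix.zero_apply]
  refine Finset.sum_eq_zero fun k _ => ?_
  rcases eq_or_ne k j with hk1 | hk1
  · have h0 : Fmat i j k y = 0 := by
      rw [Fmat_apply, if_neg (fun h => hij (h.1.symm.trans hk1)),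
        if_neg (fun h => ne_negIdx j (hk1.symm.trans h.1))]
      ring
    rw [h0, mul_zero]
  · rcases eq_or_ne k (negIdx i) with hk2 | hk2
    · have h0 : Fmat i j k y = 0 := by
        rw [Fmat_apply, if_neg (fun h => ne_negIdx i (hk2.symm.trans h.1).symm),
          if_neg (fun h => hij (negIdx_injective (hk2.symm.trans h.1)))]
        ring
      rw [h0, mul_zero]
    · have h0 : Fmat i j x k = 0 := by
        rw [Fmat_apply, if_neg (fun h => hk1 h.2), if_neg (fun h => hk2 h.2)]
        ring
      rw [h0, zero_mul]

lemma Fmat_skew (i j : Idx n) :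
    (Fmat i j)ᵀ * symJ n + symJ n * Fmat i j = 0 := by
  ext a b
  simp only [Matrix.add_apply, mul_apply, transpose_apply, Matrix.zero_apply]
  have h1 : ∑ k, Fmat i j k a * symJ n k b = Fmat i j (negIdx b) a * sgn b := by
    rw [Finset.sum_eq_single (negIdx b)]
    · rw [symJ_apply, if_pos (negIdx_negIdx b).symm]
    · intro k _ hk
      rw [symJ_apply, if_neg (fun e => hk (negIdx_eq_iff.mp e)), mul_zero]
    · intro h'; exact absurd (Finset.mem_univ _) h'
  have h2 : ∑ k, symJ n a k * Fmat i j k b = sgn (negIdx a) * Fmat i j (negIdx a) b := by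
    rw [Finset.sum_eq_single (negIdx a)]
    · rw [symJ_apply, if_pos rfl]
    · intro k _ hk
      rw [symJ_apply, if_neg hk, zero_mul]
    · intro h'; exact absurd (Finset.mem_univ _) h'
  rw [h1, h2]
  rw [Fmat_apply, Fmat_apply, sgn_negIdx]
  have e1 : (negIdx b = i ∧ a = j) ↔ (a = j ∧ b = negIdx i) := by
    constructor
    · rintro ⟨h1, h2⟩; exact ⟨h2, negIdx_eq_iff.mp h1.symm⟩
    · rintro ⟨h1, h2⟩; exact ⟨(negIdx_eq_iff.mp h2).symm, h1⟩
  have e2 : (negIdx b = negIdx j ∧ a = negIdx i) ↔ (a = negIdx i ∧ b = j) := by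
    constructor
    · rintro ⟨h1, h2⟩; exact ⟨h2, negIdx_injective h1⟩
    · rintro ⟨h1, h2⟩; exact ⟨congrArg negIdx h2, h1⟩
  have e3 : (negIdx a = i ∧ b = j) ↔ (a = negIdx i ∧ b = j) := by
    constructor
    · rintro ⟨h1, h2⟩; exact ⟨negIdx_eq_iff.mp h1.symm, h2⟩
    · rintro ⟨h1, h2⟩; exact ⟨(negIdx_eq_iff.mp h1).symm, h2⟩
  have e4 : (negIdx a = negIdx j ∧ b = negIdx i) ↔ (a = j ∧ b = negIdx i) := by
    constructor
    · rintro ⟨h1, h2⟩; exact ⟨negIdx_injective h1, h2⟩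
    · rintro ⟨h1, h2⟩; exact ⟨congrArg negIdx h1, h2⟩
  rw [if_congr e1 rfl rfl, if_congr e2 rfl rfl, if_congr e3 rfl rfl, if_congr e4 rfl rfl]
  by_cases hP : a = j ∧ b = negIdx i <;> by_cases hQ : a = negIdx i ∧ b = j
  · rw [if_pos hP, if_pos hQ]
    obtain ⟨ha, hb⟩ := hP
    rw [ha, hb, sgn_negIdx]
    rcases sgn_cases i with hi | hi <;> rcases sgn_cases j with hj2 | hj2 <;>
      rw [hi, hj2] <;> ring
  · rw [if_pos hP, if_neg hQ]
    obtain ⟨ha, hb⟩ := hP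
    rw [ha, hb, sgn_negIdx]
    rcases sgn_cases i with hi | hi <;> rcases sgn_cases j with hj2 | hj2 <;>
      rw [hi, hj2] <;> ring
  · rw [if_neg hP, if_pos hQ]
    obtain ⟨ha, hb⟩ := hQ
    rw [ha, hb, sgn_negIdx]
    rcases sgn_cases i with hi | hi <;> rcases sgn_cases j with hj2 | hj2 <;>
      rw [hi, hj2] <;> ring
  · rw [if_neg hP, if_neg hQ]; ring





lemma natAbs_negIdx (k : Idx n) : (idxVal (negIdx k)).natAbs = (idxVal k).natAbs := by
  rw [idxVal_negIdx, Int.natAbs_neg]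

lemma elem_apply (i j : Idx n) (s : ℂ) (x y : Idx n) :
    (1 + s • Fmat i j) x y = (if x = y then 1 else 0) + s * Fmat i j x y := by
  simp [Matrix.add_apply, one_apply, Matrix.smul_apply, smul_eq_mul]

lemma elem_symp {i j : Idx n} (hij : i ≠ j) (s : ℂ) :
    (1 + s • Fmat i j)ᵀ * symJ n * (1 + s • Fmat i j) = symJ n := by
  have hskew : (Fmat i j)ᵀ * symJ n = -(symJ n * Fmat i j) :=
    eq_neg_of_add_eq_zero_left (Fmat_skew i j)
  have hsq : symJ n * Fmat i j * Fmat i j = 0 := by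
    rw [Matrix.mul_assoc, Fmat_mul_self hij, Matrix.mul_zero]
  rw [transpose_add, transpose_smul, transpose_one]
  simp only [add_mul, mul_add, one_mul, mul_one, Matrix.smul_mul, Matrix.mul_smul, smul_smul]
  rw [hskew]
  simp only [Matrix.neg_mul, hsq, smul_neg, smul_zero, neg_zero, add_zero]
  abel

lemma elem_mem_ZSp {i j : Idx n} (h1 : idxVal i < idxVal j) (h2 : 2 ≤ (idxVal i).natAbs)
    (h3 : 2 ≤ (idxVal j).natAbs) (s : ℂ) : (1 + s • Fmat i j) ∈ ZSpset n := by
  have hij : i ≠ j := fun e => by rw [e] at h1; omega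
  refine ⟨⟨elem_symp hij s, ?_⟩, ?_⟩
  · intro x y hxy
    have c1 : ¬ (x = i ∧ y = j) := by
      rintro ⟨e1, e2⟩; rw [e1, e2] at hxy; omega
    have c2 : ¬ (x = negIdx j ∧ y = negIdx i) := by
      rintro ⟨e1, e2⟩; rw [e1, e2, idxVal_negIdx, idxVal_negIdx] at hxy; omega
    have hF : Fmat i j x y = 0 := by rw [Fmat_apply, if_neg c1, if_neg c2]; ring
    rw [elem_apply, hF, mul_zero, add_zero]
  · intro x y hxy
    have c1 : ¬ (x = i ∧ y = j) := by
      rintro ⟨e1, e2⟩; rw [e1, e2] at hxy; rcases hxy with h | h <;> omega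
    have c2 : ¬ (x = negIdx j ∧ y = negIdx i) := by
      rintro ⟨e1, e2⟩; rw [e1, e2, natAbs_negIdx, natAbs_negIdx] at hxy
      rcases hxy with h | h <;> omega
    have hF : Fmat i j x y = 0 := by rw [Fmat_apply, if_neg c1, if_neg c2]; ring
    rw [elem_apply, hF, mul_zero, add_zero]

lemma elem_mul_neg {i j : Idx n} (hij : i ≠ j) (s : ℂ) :
    (1 + s • Fmat i j) * (1 + (-s) • Fmat i j) = 1 := by
  have hsq := Fmat_mul_self hij
  have h2 : (s • Fmat i j) * ((-s) • Fmat i j) = 0 := by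
    rw [Matrix.smul_mul, Matrix.mul_smul, hsq, smul_zero, smul_zero]
  simp only [add_mul, mul_add, one_mul, mul_one]
  rw [h2, neg_smul]
  abel

lemma exp_elem {i j : Idx n} (hij : i ≠ j) (s : ℂ) :
    NormedSpace.exp (s • Fmat i j) = 1 + s • Fmat i j := by
  have hsq : (s • Fmat i j) * (s • Fmat i j) = 0 := by
    rw [Matrix.smul_mul, Matrix.mul_smul, Fmat_mul_self hij, smul_zero, smul_zero]
  simp only [NormedSpace.exp_eq_tsum ℂ]
  rw [tsum_eq_sum (s := Finset.range 2) ?_]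
  · rw [Finset.sum_range_succ, Finset.sum_range_succ, Finset.sum_range_zero]
    norm_num
  · intro b hb
    have hb2 : 2 ≤ b := by simp at hb; omega
    have h0 : (s • Fmat i j) ^ b = 0 := by
      have : b = 2 + (b - 2) := by omega
      rw [this, pow_add, pow_two, hsq, Matrix.zero_mul]
    rw [h0, smul_zero]





lemma ZSp.mul {u v : Matrix (Idx n) (Idx n) ℂ} (hu : u ∈ ZSpset n) (hv : v ∈ ZSpset n) :
    u * v ∈ ZSpset n := by
  refine ⟨Zset.mul hu.1 hv.1, ?_⟩
  intro x y hxy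
  rcases hxy with hx | hy
  · rw [mul_apply, Finset.sum_eq_single x]
    · rw [hu.2 x x (Or.inl hx), if_pos rfl, one_mul]
      exact hv.2 x y (Or.inl hx)
    · intro k _ hk
      rw [hu.2 x k (Or.inl hx), if_neg (fun e => hk e.symm), zero_mul]
    · intro h'; exact absurd (Finset.mem_univ _) h'
  · rw [mul_apply, Finset.sum_eq_single y]
    · rw [hv.2 y y (Or.inr hy), if_pos rfl, mul_one]
      exact hu.2 x y (Or.inr hy)
    · intro k _ hk
      rw [hv.2 k y (Or.inr hy), if_neg hk, mul_zero]
    · intro h'; exact absurd (Finset.mem_univ _) h'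

noncomputable def elemM (p : Idx n × Idx n × ℂ) : Matrix (Idx n) (Idx n) ℂ := 1 + p.2.2 • Fmat p.1 p.2.1

noncomputable def prodElem (L : List (Idx n × Idx n × ℂ)) : Matrix (Idx n) (Idx n) ℂ := (L.map elemM).prod

def Valid (L : List (Idx n × Idx n × ℂ)) : Prop :=
  ∀ p ∈ L, idxVal p.1 < idxVal p.2.1 ∧ 2 ≤ (idxVal p.1).natAbs ∧ 2 ≤ (idxVal p.2.1).natAbs

lemma prodElem_nil : prodElem ([] : List (Idx n × Idx n × ℂ)) = 1 := rfl

lemma prodElem_cons (p : Idx n × Idx n × ℂ) (L : List (Idx n × Idx n × ℂ)) :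
    prodElem (p :: L) = elemM p * prodElem L := by
  simp [prodElem]

lemma prodElem_append (L1 L2 : List (Idx n × Idx n × ℂ)) :
    prodElem (L1 ++ L2) = prodElem L1 * prodElem L2 := by
  simp [prodElem]

lemma elemM_mem_ZSp {p : Idx n × Idx n × ℂ}
    (h : idxVal p.1 < idxVal p.2.1 ∧ 2 ≤ (idxVal p.1).natAbs ∧ 2 ≤ (idxVal p.2.1).natAbs) :
    elemM p ∈ ZSpset n := elem_mem_ZSp h.1 h.2.1 h.2.2 _

lemma mul_Emat_apply (u : Matrix (Idx n) (Idx n) ℂ) (a b x y : Idx n) :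
    (u * Emat a b) x y = if y = b then u x a else 0 := by
  unfold Emat
  by_cases hy : y = b
  · subst hy
    rw [Matrix.mul_single_apply_same, if_pos rfl, mul_one]
  · rw [Matrix.mul_single_apply_of_ne (i := a) (j := b) (a := x) (b := y) (hbj := hy), if_neg hy]

/-- Key entry formula for right multiplication by an elementary matrix. -/
lemma mul_elem_apply (u : Matrix (Idx n) (Idx n) ℂ) (r0 j : Idx n) (s : ℂ) (x y : Idx n) :
    (u * (1 + s • Fmat r0 j)) x y
      = u x y + s * ((if y = j then u x r0 else 0)
          - sgn r0 * sgn j * (if y = negIdx r0 then u x (negIdx j) else 0)) := by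
  rw [Matrix.mul_add, Matrix.mul_one, Matrix.mul_smul, Matrix.add_apply, Matrix.smul_apply, smul_eq_mul]
  congr 1
  congr 1
  have : Fmat r0 j = Emat r0 j - (sgn r0 * sgn j) • Emat (negIdx j) (negIdx r0) := rfl
  rw [this, Matrix.mul_sub, Matrix.mul_smul, Matrix.sub_apply, Matrix.smul_apply, smul_eq_mul,
    mul_Emat_apply, mul_Emat_apply]

section Clearing
variable {m : ℕ}

/-- Clearing row `r0 = Sum.inl ⟨m, _⟩` of `u`, columns with `idxVal < m+2-k` already cleared. -/
lemma inner (hm1 : 1 ≤ m) (hmn : m < n) (k : ℕ) :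
    ∀ u ∈ ZSpset n,
      (∀ a : Fin n, m < a.1 → ∀ y, u (Sum.inl a) y
          = if (Sum.inl a : Idx n) = y then 1 else 0) →
      (∀ y : Idx n, -(m + 1 : ℤ) < idxVal y → idxVal y < (m + 2 : ℤ) - k
          → u (Sum.inl ⟨m, hmn⟩) y = 0) →
      ∃ L : List (Idx n × Idx n × ℂ), Valid L ∧ u * prodElem L ∈ ZSpset n ∧
        (∀ a : Fin n, m ≤ a.1 → ∀ y, (u * prodElem L) (Sum.inl a) y
            = if (Sum.inl a : Idx n) = y then 1 else 0) := by
  have hvr0 : idxVal (Sum.inl ⟨m, hmn⟩ : Idx n) = -(m + 1 : ℤ) := by simp [idxVal]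
  induction k with
  | zero =>
    intro u hu hRows hInv
    refine ⟨[], fun p hp => absurd hp List.not_mem_nil, ?_, ?_⟩
    · rw [prodElem_nil, Matrix.mul_one]; exact hu
    · rw [prodElem_nil, Matrix.mul_one]
      intro a ha y
      rcases eq_or_lt_of_le ha with ha' | ha'
      · -- a.1 = m, so Sum.inl a = r0
        have haeq : a = ⟨m, hmn⟩ := Fin.ext ha'.symm
        subst haeq
        rcases le_or_gt (idxVal y) (-(m + 1 : ℤ)) with h | h
        · exact hu.1.2 _ y (by rw [hvr0]; exact h)
        · have hne : (Sum.inl ⟨m, hmn⟩ : Idx n) ≠ y := by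
            intro e; rw [← e, hvr0] at h; omega
          rw [if_neg hne]
          rcases lt_or_ge (idxVal y) ((m + 2 : ℤ)) with h2 | h2
          · exact hInv y (by omega) (by omega)
          · cases y with
            | inl b => simp [idxVal] at h2; omega
            | inr b =>
              have hb : m < b.1 := by simp [idxVal] at h2; omega
              have := row_id_col_id hu.1 (hRows b hb) (Sum.inl ⟨m, hmn⟩)
              have hswap : negIdx (Sum.inl b : Idx n) = Sum.inr b := rfl
              rw [hswap] at this
              rw [this, if_neg (by simp)]
      · exact hRows a ha' y
  | succ k ih =>
    intro u hu hRows hInv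
    -- threshold
    set τ : ℤ := (m + 2 : ℤ) - (k + 1) with hτ
    by_cases hgood : (2 ≤ τ ∧ τ ≤ (m : ℤ) + 1) ∨ (-(m : ℤ) ≤ τ ∧ τ ≤ -2)
    · -- there is a column j with idxVal j = τ
      obtain ⟨j, hj⟩ : ∃ j : Idx n, idxVal j = τ := by
        rcases hgood with ⟨h1, h2⟩ | ⟨h1, h2⟩
        · exact ⟨Sum.inr ⟨(τ - 1).toNat, by omega⟩, by simp [idxVal]; omega⟩
        · exact ⟨Sum.inl ⟨(-τ - 1).toNat, by omega⟩, by simp [idxVal]; omega⟩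
      have hτabs : 2 ≤ τ.natAbs := by rcases hgood with ⟨h1, h2⟩ | ⟨h1, h2⟩ <;> omega
      have hτlt : -(m + 1 : ℤ) < τ ∧ τ ≤ (m : ℤ) + 1 := by
        rcases hgood with ⟨h1, h2⟩ | ⟨h1, h2⟩ <;> constructor <;> omega
      set r0 : Idx n := Sum.inl ⟨m, hmn⟩ with hr0
      have hval : idxVal r0 < idxVal j := by rw [hvr0, hj]; exact hτlt.1
      have habs : 2 ≤ (idxVal r0).natAbs := by rw [hvr0]; omega
      have habs2 : 2 ≤ (idxVal j).natAbs := by rw [hj]; exact hτabs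
      -- the column r0 of u is the basis vector e_{r0}
      have hcol : ∀ x, u x r0 = if x = r0 then 1 else 0 := by
        intro x
        rcases le_or_gt (idxVal r0) (idxVal x) with h | h
        · exact hu.1.2 x r0 h
        · cases x with
          | inl a =>
            have ha : m < a.1 := by rw [hvr0] at h; simp [idxVal] at h; omega
            exact hRows a ha r0
          | inr a => rw [hvr0] at h; simp [idxVal] at h; omega
      set s : ℂ := -(u r0 j) / (if j = negIdx r0 then 2 else 1) with hs
      set g : Idx n × Idx n × ℂ := (r0, j, s) with hg
      have hgvalid : idxVal g.1 < idxVal g.2.1 ∧ 2 ≤ (idxVal g.1).natAbs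
          ∧ 2 ≤ (idxVal g.2.1).natAbs := ⟨hval, habs, habs2⟩
      set u' : Matrix (Idx n) (Idx n) ℂ := u * elemM g with hu'
      have happly : ∀ x y, u' x y = u x y + s * ((if y = j then u x r0 else 0)
          - sgn r0 * sgn j * (if y = negIdx r0 then u x (negIdx j) else 0)) := by
        intro x y; exact mul_elem_apply u r0 j s x y
      have hu'mem : u' ∈ ZSpset n := ZSp.mul hu (elemM_mem_ZSp hgvalid)
      have hRows' : ∀ a : Fin n, m < a.1 → ∀ y, u' (Sum.inl a) y
          = if (Sum.inl a : Idx n) = y then 1 else 0 := by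
        intro a ha y
        rw [happly]
        have h1 : u (Sum.inl a) r0 = 0 := by
          rw [hRows a ha r0, if_neg ?_]
          intro e
          have : idxVal (Sum.inl a : Idx n) = idxVal r0 := by rw [e]
          rw [hvr0] at this
          simp [idxVal] at this
          omega
        have h2 : u (Sum.inl a) (negIdx j) = 0 := by
          rw [hRows a ha (negIdx j), if_neg ?_]
          intro e
          have : idxVal (Sum.inl a : Idx n) = idxVal (negIdx j) := by rw [e]
          rw [idxVal_negIdx, hj] at this
          simp [idxVal] at this
          omega
        rw [h1, h2, hRows a ha y]
        simp
      have hInv' : ∀ y : Idx n, -(m + 1 : ℤ) < idxVal y → idxVal y < (m + 2 : ℤ) - k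
          → u' (Sum.inl ⟨m, hmn⟩) y = 0 := by
        intro y hy1 hy2
        rw [happly]
        rcases lt_or_ge (idxVal y) τ with hy3 | hy3
        · have e1 : u r0 y = 0 := hInv y hy1 (by omega)
          have e2 : y ≠ j := fun e => by rw [e, hj] at hy3; omega
          have e3 : y ≠ negIdx r0 := by
            intro e
            rw [e, idxVal_negIdx, hvr0] at hy3
            omega
          rw [e1, if_neg e2, if_neg e3]
          ring
        · have hyτ : idxVal y = τ := by omega
          have hyj : y = j := idxVal_inj (by rw [hyτ, hj])
          subst hyj
          rw [if_pos rfl, hcol r0, if_pos rfl]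
          by_cases hcase : y = negIdx r0
          · rw [if_pos hcase, hs, if_pos hcase]
            have hnj : negIdx y = r0 := by rw [hcase, negIdx_negIdx]
            rw [hnj, hcol r0, if_pos rfl]
            have hsgn : sgn r0 * sgn y = -1 := by
              rw [hcase, sgn_negIdx]
              rcases sgn_cases r0 with h | h <;> rw [h] <;> ring
            rw [hsgn]
            field_simp
            ring
          · rw [if_neg hcase, hs, if_neg hcase]
            field_simp
            rw [← hr0]; ring
      obtain ⟨L', hL'valid, hL'mem, hL'rows⟩ := ih u' hu'mem hRows' hInv'
      refine ⟨g :: L', ?_, ?_, ?_⟩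
      · intro p hp
        rcases List.mem_cons.mp hp with rfl | hp'
        · exact hgvalid
        · exact hL'valid p hp'
      · rw [prodElem_cons, ← Matrix.mul_assoc]; exact hL'mem
      · intro a ha y
        rw [prodElem_cons, ← Matrix.mul_assoc]
        exact hL'rows a ha y
    · -- no column to clear at this threshold; invariant extends automatically
      apply ih u hu hRows
      intro y hy1 hy2
      rcases lt_or_ge (idxVal y) τ with hy3 | hy3
      · exact hInv y hy1 (by omega)
      · have hyτ : idxVal y = τ := by omega
        -- τ is in {-1, 0, 1} or out of range
        have hτ1 : τ.natAbs = 1 ∨ τ = 0 ∨ τ < -(m : ℤ) := by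
          push_neg at hgood
          omega
        rcases hτ1 with h | h | h
        · have : (idxVal (Sum.inl ⟨m, hmn⟩ : Idx n)).natAbs = 1 ∨ (idxVal y).natAbs = 1 :=
            Or.inr (by rw [hyτ]; exact h)
          rw [hu.2 _ y this, if_neg (by intro e; rw [← e, hvr0] at hyτ; omega)]
        · exact absurd (hyτ.trans h) (idxVal_ne_zero y)
        · omega
  -- end
end Clearing

lemma outer : ∀ m : ℕ, ∀ u ∈ ZSpset n,
    (∀ a : Fin n, m ≤ a.1 → ∀ y, u (Sum.inl a) y = if (Sum.inl a : Idx n) = y then 1 else 0) →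
    ∃ L, Valid L ∧ u * prodElem L = 1 := by
  intro m
  induction m with
  | zero =>
    intro u hu hRows
    refine ⟨[], fun p hp => absurd hp List.not_mem_nil, ?_⟩
    rw [prodElem_nil, Matrix.mul_one]
    ext x y
    cases x with
    | inl a => rw [hRows a (Nat.zero_le _) y, one_apply]
    | inr a =>
      cases y with
      | inl b =>
        rw [hu.1.2 _ _ (by simp [idxVal]; omega), one_apply]
      | inr b =>
        have h := row_id_col_id hu.1 (hRows b (Nat.zero_le _)) (Sum.inr a)
        have hsw : negIdx (Sum.inl b : Idx n) = Sum.inr b := rfl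
        rw [hsw] at h
        rw [h, one_apply]
  | succ m ih =>
    intro u hu hRows
    by_cases hm : 1 ≤ m ∧ m < n
    · obtain ⟨L0, hL0valid, hL0mem, hL0rows⟩ := inner hm.1 hm.2 (2*m+2) u hu
        (fun a ha y => hRows a (by omega) y)
        (fun y hy1 hy2 => by exfalso; push_cast at hy1 hy2; omega)
      obtain ⟨L1, hL1valid, hL1⟩ := ih (u * prodElem L0) hL0mem hL0rows
      refine ⟨L0 ++ L1, ?_, ?_⟩
      · intro p hp
        rcases List.mem_append.mp hp with h | h
        · exact hL0valid p h
        · exact hL1valid p h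
      · rw [prodElem_append, ← Matrix.mul_assoc]
        exact hL1
    · apply ih u hu
      intro a ha y
      rcases Nat.lt_or_ge a.1 (m + 1) with ha' | ha'
      · -- a.1 = m
        have ham : a.1 = m := by omega
        rcases not_and_or.mp hm with h0 | hn0
        · -- m = 0
          have : (idxVal (Sum.inl a : Idx n)).natAbs = 1 := by
            simp [idxVal]; omega
          exact hu.2 _ y (Or.inl this)
        · exact absurd a.2 (by omega)
      · exact hRows a ha' y

def invL (L : List (Idx n × Idx n × ℂ)) : List (Idx n × Idx n × ℂ) :=
  (L.map (fun p => (p.1, p.2.1, -p.2.2))).reverse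

lemma prod_invL {L : List (Idx n × Idx n × ℂ)} (hL : Valid L) :
    prodElem L * prodElem (invL L) = 1 := by
  induction L with
  | nil => rw [prodElem_nil, Matrix.one_mul]; rfl
  | cons p L ih =>
    have hv : Valid L := fun q hq => hL q (List.mem_cons_of_mem p hq)
    have hp := hL p List.mem_cons_self
    have hne : p.1 ≠ p.2.1 := fun e => by rw [e] at hp; exact absurd hp.1 (lt_irrefl _)
    have hinv : invL (p :: L) = invL L ++ [(p.1, p.2.1, -p.2.2)] := by simp [invL]
    rw [prodElem_cons, hinv, prodElem_append]
    have hsingle : prodElem ([(p.1, p.2.1, -p.2.2)] : List (Idx n × Idx n × ℂ))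
        = 1 + (-p.2.2) • Fmat p.1 p.2.1 := by
      rw [show ([(p.1, p.2.1, -p.2.2)] : List (Idx n × Idx n × ℂ))
          = (p.1, p.2.1, -p.2.2) :: [] from rfl, prodElem_cons, prodElem_nil, Matrix.mul_one]
      rfl
    calc elemM p * prodElem L * (prodElem (invL L) * prodElem [(p.1, p.2.1, -p.2.2)])
        = elemM p * (prodElem L * prodElem (invL L)) * prodElem [(p.1, p.2.1, -p.2.2)] := by
          rw [Matrix.mul_assoc (elemM p), Matrix.mul_assoc (elemM p), Matrix.mul_assoc]
      _ = elemM p * prodElem [(p.1, p.2.1, -p.2.2)] := by rw [ih hv, Matrix.mul_one]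
      _ = 1 := by rw [hsingle]; exact elem_mul_neg hne p.2.2

lemma valid_invL {L : List (Idx n × Idx n × ℂ)} (hL : Valid L) : Valid (invL L) := by
  intro p hp
  simp only [invL, List.mem_reverse, List.mem_map] at hp
  obtain ⟨q, hq, rfl⟩ := hp
  exact hL q hq

lemma decomp {u : Matrix (Idx n) (Idx n) ℂ} (hu : u ∈ ZSpset n) :
    ∃ L, Valid L ∧ u = prodElem L := by
  obtain ⟨L, hLv, hL1⟩ := outer n u hu (fun a ha y => absurd a.2 (by omega))
  refine ⟨invL L, valid_invL hLv, ?_⟩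
  calc u = u * (prodElem L * prodElem (invL L)) := by rw [prod_invL hLv, Matrix.mul_one]
    _ = (u * prodElem L) * prodElem (invL L) := by rw [Matrix.mul_assoc]
    _ = prodElem (invL L) := by rw [hL1, Matrix.one_mul]

end ZhelAux

namespace ZhelAux

variable {n : ℕ}

lemma invariance_of_list (f : Matrix (Idx n) (Idx n) ℂ → ℂ)
    (hA : ∀ i j : Idx n, idxVal i < idxVal j →
        2 ≤ (idxVal i).natAbs → 2 ≤ (idxVal j).natAbs →
        ∀ s : ℂ, ∀ z ∈ Zset n,
          f (z * NormedSpace.exp (s • Fmat i j)) = f z) :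
    ∀ L : List (Idx n × Idx n × ℂ), Valid L → ∀ z ∈ Zset n, f (z * prodElem L) = f z := by
  intro L
  induction L with
  | nil => intro _ z hz; rw [prodElem_nil, Matrix.mul_one]
  | cons p L ih =>
    intro hv z hz
    have hp := hv p List.mem_cons_self
    have hne : p.1 ≠ p.2.1 := fun e => by rw [e] at hp; exact absurd hp.1 (lt_irrefl _)
    have hz' : z * elemM p ∈ Zset n := Zset.mul hz (elemM_mem_ZSp hp).1
    rw [prodElem_cons, ← Matrix.mul_assoc,
      ih (fun q hq => hv q (List.mem_cons_of_mem _ hq)) _ hz']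
    have h := hA p.1 p.2.1 hp.1 hp.2.1 hp.2.2 p.2.2 z hz
    rw [exp_elem hne] at h
    exact h

lemma eq_of_natAbs_one {x : Idx n} (hn0 : 0 < n) (hx : (idxVal x).natAbs = 1) :
    x = Sum.inl ⟨0, hn0⟩ ∨ x = Sum.inr ⟨0, hn0⟩ := by
  cases x with
  | inl a =>
    left; simp [idxVal] at hx
    exact congrArg Sum.inl (Fin.ext (show a.1 = 0 by omega))
  | inr a =>
    right; simp [idxVal] at hx
    exact congrArg Sum.inr (Fin.ext (show a.1 = 0 by omega))

lemma mem_ZSp_of_cols (hn0 : 0 < n) {u : Matrix (Idx n) (Idx n) ℂ} (hu : u ∈ Zset n)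
    (hc1 : ∀ x, u x (Sum.inl ⟨0, hn0⟩) = if x = Sum.inl ⟨0, hn0⟩ then 1 else 0)
    (hc2 : ∀ x, u x (Sum.inr ⟨0, hn0⟩) = if x = Sum.inr ⟨0, hn0⟩ then 1 else 0) :
    u ∈ ZSpset n := by
  have hrow2 : ∀ b, u (Sum.inr ⟨0, hn0⟩) b = if (Sum.inr ⟨0, hn0⟩ : Idx n) = b then 1 else 0 := by
    intro b
    have h := symp_rel hu.1 (Sum.inl ⟨0, hn0⟩) b
    rw [Finset.sum_eq_single (Sum.inr ⟨0, hn0⟩ : Idx n)] at h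
    · have hsw : negIdx (Sum.inr ⟨0, hn0⟩ : Idx n) = Sum.inl ⟨0, hn0⟩ := rfl
      rw [hsw, hc1, if_pos rfl, one_mul] at h
      have hsg : sgn (Sum.inr ⟨0, hn0⟩ : Idx n) = 1 := rfl
      rw [hsg, one_mul, symJ_apply] at h
      rw [h]
      rcases eq_or_ne b (Sum.inr ⟨0, hn0⟩ : Idx n) with rfl | hb
      · rw [if_pos (show (Sum.inr ⟨0, hn0⟩ : Idx n) = negIdx (Sum.inl ⟨0, hn0⟩) from rfl),
          if_pos rfl]
        exact hsg
      · rw [if_neg (fun e => hb (by rw [e]; rfl)), if_neg (fun e => hb e.symm)]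
    · intro k _ hk
      rw [hc1 (negIdx k), if_neg (fun e => hk (by rw [← negIdx_negIdx k, e]; rfl)), zero_mul]
    · intro h'; exact absurd (Finset.mem_univ _) h'
  have hrow1 : ∀ b, u (Sum.inl ⟨0, hn0⟩) b = if (Sum.inl ⟨0, hn0⟩ : Idx n) = b then 1 else 0 := by
    intro b
    have h := symp_rel hu.1 (Sum.inr ⟨0, hn0⟩) b
    rw [Finset.sum_eq_single (Sum.inl ⟨0, hn0⟩ : Idx n)] at h
    · have hsw : negIdx (Sum.inl ⟨0, hn0⟩ : Idx n) = Sum.inr ⟨0, hn0⟩ := rfl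
      rw [hsw, hc2, if_pos rfl, one_mul] at h
      have hsg : sgn (Sum.inl ⟨0, hn0⟩ : Idx n) = -1 := rfl
      rw [hsg, symJ_apply] at h
      have h' : u (Sum.inl ⟨0, hn0⟩) b
          = -(if b = negIdx (Sum.inr ⟨0, hn0⟩ : Idx n) then sgn b else 0) := by
        rw [← h]; ring
      rw [h']
      rcases eq_or_ne b (Sum.inl ⟨0, hn0⟩ : Idx n) with rfl | hb
      · rw [if_pos (show (Sum.inl ⟨0, hn0⟩ : Idx n) = negIdx (Sum.inr ⟨0, hn0⟩) from rfl),
          if_pos rfl, hsg]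
        norm_num
      · rw [if_neg (fun e => hb (by rw [e]; rfl)), if_neg (fun e => hb e.symm), neg_zero]
    · intro k _ hk
      rw [hc2 (negIdx k), if_neg (fun e => hk (by rw [← negIdx_negIdx k, e]; rfl)), zero_mul]
    · intro h'; exact absurd (Finset.mem_univ _) h'
  refine ⟨hu, ?_⟩
  intro x y hxy
  rcases hxy with hx | hy
  · rcases eq_of_natAbs_one hn0 hx with rfl | rfl
    · exact hrow1 y
    · exact hrow2 y
  · rcases eq_of_natAbs_one hn0 hy with rfl | rfl
    · exact hc1 x
    · exact hc2 x

end ZhelAux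

open ZhelAux in
/-- Zhelobenko's lemma: for a (polynomial) vector `f` in the realization of an
irreducible `sp(2n)`-module on functions on `Z`, the following are equivalent:
`f` is an `sp(2n-2)`-highest vector (i.e. invariant under the one-parameter subgroups
generated by the positive root vectors `F_{i,j}` of `sp(2n-2)`);
`f` is invariant under right translation by `Z_{Sp(2n-2)}`;
`f` depends only on the variables `z_{-n,-1},...,z_{-2,-1},z_{-n,1},...,z_{-1,1}`. -/
theorem stmt11 (n : ℕ) (hn : 2 ≤ n)
    (f : Matrix (Idx n) (Idx n) ℂ → ℂ)
    (hpoly : ∃ P : MvPolynomial (Idx n × Idx n) ℂ,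
      ∀ z, f z = MvPolynomial.eval (fun p => z p.1 p.2) P) :
    ((∀ i j : Idx n, idxVal i < idxVal j →
        2 ≤ (idxVal i).natAbs → 2 ≤ (idxVal j).natAbs →
        ∀ s : ℂ, ∀ z ∈ Zset n,
          f (z * NormedSpace.exp (s • Fmat i j)) = f z)
      ↔ (∀ u ∈ ZSpset n, ∀ z ∈ Zset n, f (z * u) = f z)) ∧
    ((∀ u ∈ ZSpset n, ∀ z ∈ Zset n, f (z * u) = f z)
      ↔ (∀ z ∈ Zset n, ∀ w ∈ Zset n,
          (∀ a : Fin n,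
            (1 ≤ a.1 → z (Sum.inl a) (Sum.inl ⟨0, by omega⟩)
              = w (Sum.inl a) (Sum.inl ⟨0, by omega⟩)) ∧
            z (Sum.inl a) (Sum.inr ⟨0, by omega⟩)
              = w (Sum.inl a) (Sum.inr ⟨0, by omega⟩)) →
          f z = f w)) := by
  have hn0 : 0 < n := by omega
  constructor
  · constructor
    · -- highest-vector condition implies invariance under `Z_{Sp(2n-2)}`
      intro hA u hu z hz
      obtain ⟨L, hLv, hEq⟩ := decomp hu
      rw [hEq]
      exact invariance_of_list f hA L hLv z hz
    · -- invariance implies the one-parameter invariance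
      intro hB i j h1 h2 h3 s z hz
      have hne : i ≠ j := fun e => by rw [e] at h1; exact absurd h1 (lt_irrefl _)
      rw [exp_elem hne]
      exact hB _ (elem_mem_ZSp h1 h2 h3 s) z hz
  · constructor
    · -- invariance implies `f` depends only on the distinguished variables
      intro hB z hz w hw hagree
      have hcolw1 : ∀ k, w k (Sum.inl ⟨0, hn0⟩) = z k (Sum.inl ⟨0, hn0⟩) := by
        intro k
        cases k with
        | inl a =>
          rcases Nat.eq_zero_or_pos a.1 with h0 | h1
          · have ha : (Sum.inl a : Idx n) = Sum.inl ⟨0, hn0⟩ :=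
              congrArg Sum.inl (Fin.ext h0)
            rw [ha, Zset.diag hw, Zset.diag hz]
          · exact ((hagree a).1 h1).symm
        | inr a =>
          rw [hw.2 _ _ (by first | (simp [idxVal]; omega) | simp [idxVal]),
            hz.2 _ _ (by first | (simp [idxVal]; omega) | simp [idxVal])]
      have hcolw2 : ∀ k, w k (Sum.inr ⟨0, hn0⟩) = z k (Sum.inr ⟨0, hn0⟩) := by
        intro k
        cases k with
        | inl a => exact ((hagree a).2).symm
        | inr a =>
          rw [hw.2 _ _ (by first | (simp [idxVal]; omega) | simp [idxVal]),
            hz.2 _ _ (by first | (simp [idxVal]; omega) | simp [idxVal])]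
      set u : Matrix (Idx n) (Idx n) ℂ := zinv z * w with hudef
      have hu_z : u ∈ Zset n := Zset.mul (zinv_mem hz) hw
      have hc1 : ∀ x, u x (Sum.inl ⟨0, hn0⟩) = if x = Sum.inl ⟨0, hn0⟩ then 1 else 0 := by
        intro x
        have h : u x (Sum.inl ⟨0, hn0⟩) = (zinv z * z) x (Sum.inl ⟨0, hn0⟩) := by
          rw [hudef, mul_apply, mul_apply]
          exact Finset.sum_congr rfl fun k _ => by rw [hcolw1 k]
        rw [h, zinv_mul hz, one_apply]
      have hc2 : ∀ x, u x (Sum.inr ⟨0, hn0⟩) = if x = Sum.inr ⟨0, hn0⟩ then 1 else 0 := by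
        intro x
        have h : u x (Sum.inr ⟨0, hn0⟩) = (zinv z * z) x (Sum.inr ⟨0, hn0⟩) := by
          rw [hudef, mul_apply, mul_apply]
          exact Finset.sum_congr rfl fun k _ => by rw [hcolw2 k]
        rw [h, zinv_mul hz, one_apply]
      have huZSp : u ∈ ZSpset n := mem_ZSp_of_cols hn0 hu_z hc1 hc2
      have hwzu : w = z * u := by
        rw [hudef, ← Matrix.mul_assoc, mul_zinv hz, Matrix.one_mul]
      calc f z = f (z * u) := (hB u huZSp z hz).symm
        _ = f w := by rw [← hwzu]
    · -- dependence only on the distinguished variables implies invariance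
      intro hC u hu z hz
      have hcolu : ∀ (x c : Idx n), (idxVal c).natAbs = 1 → (z * u) x c = z x c := by
        intro x c hcnat
        rw [mul_apply, Finset.sum_eq_single c]
        · rw [Zset.diag hu.1, mul_one]
        · intro k _ hk
          rw [hu.2 k c (Or.inr hcnat), if_neg hk, mul_zero]
        · intro h'; exact absurd (Finset.mem_univ _) h'
      refine hC (z * u) (Zset.mul hz hu.1) z hz ?_
      intro a
      constructor
      · intro _
        exact hcolu (Sum.inl a) (Sum.inl ⟨0, by omega⟩) (by simp [idxVal])
      · exact hcolu (Sum.inl a) (Sum.inr ⟨0, by omega⟩) (by simp [idxVal])
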